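/- Let f ∈ L^∞(ℝ), let I be a dyadic interval of length L with center c_I, let x ∈ I, and let f₂ = f·χ_{ℝ∖I*}. Then ∑_{k: 2^k ≥ L} sup_{J ∈ 𝓘_k} |M_{J+x} f₂(x) − E_k f₂(x) − (M_{J+c_I} f₂(c_I) − E_k f₂(c_I))| ≤ C‖f‖_∞ for an absolute constant C, where 𝓘_k is the set of intervals of length 2^k containing 0. -/

import Mathlib

open MeasureTheory Set ENNReal

/-- The dyadic interval `[j·2^{k₀}, (j+1)·2^{k₀})`. -/
noncomputable def dyadicI (k₀ j : ℤ) : Set ℝ :=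
  Set.Ico ((j:ℝ) * (2:ℝ) ^ k₀) ((j + 1 : ℝ) * (2:ℝ) ^ k₀)

/-- The center of the dyadic interval `dyadicI k₀ j`. -/
noncomputable def dyadicC (k₀ j : ℤ) : ℝ := (j:ℝ) * (2:ℝ) ^ k₀ + (2:ℝ) ^ k₀ / 2

/-- The concentric triple `I*` of the dyadic interval `dyadicI k₀ j`. -/
noncomputable def dyadicStar (k₀ j : ℤ) : Set ℝ :=
  Set.Icc (dyadicC k₀ j - 3 * (2:ℝ) ^ k₀ / 2) (dyadicC k₀ j + 3 * (2:ℝ) ^ k₀ / 2)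

/-- Dyadic conditional expectation at scale `2^k`. -/
noncomputable def dyadicE (f : ℝ → ℝ) (k : ℤ) (x : ℝ) : ℝ :=
  (2:ℝ) ^ (-k) *
    ∫ y in Set.Ico ((⌊x / (2:ℝ) ^ k⌋ : ℝ) * (2:ℝ) ^ k)
      ((⌊x / (2:ℝ) ^ k⌋ + 1 : ℝ) * (2:ℝ) ^ k), f y

/-- The average of `g` over `J + t`, where `J = [a, a + 2^k)` records an interval of
length `2^k` containing `0` (so `a ∈ [-2^k, 0]`). -/
noncomputable def avgJ (g : ℝ → ℝ) (k : ℤ) (a t : ℝ) : ℝ :=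
  (2:ℝ) ^ (-k) * ∫ y in Set.Ico (t + a) (t + a + (2:ℝ) ^ k), g y

lemma abs_intervalIntegral_le_aux {g : ℝ → ℝ} {M : ℝ}
    (hbd : ∀ᵐ y : ℝ, ‖g y‖ ≤ M) (u v : ℝ) :
    |∫ y in u..v, g y| ≤ M * |v - u| := by
  rcases le_total u v with h | h
  · rw [intervalIntegral.integral_of_le h, abs_of_nonneg (by linarith : (0:ℝ) ≤ v - u),
      ← Real.norm_eq_abs]
    have := norm_setIntegral_le_of_norm_le_const_ae (μ := (volume : Measure ℝ))
      (s := Set.Ioc u v) measure_Ioc_lt_top (ae_restrict_of_ae hbd)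
    rwa [measureReal_def, Real.volume_Ioc, ENNReal.toReal_ofReal (by linarith)] at this
  · rw [intervalIntegral.integral_symm, abs_neg, intervalIntegral.integral_of_le h,
      abs_of_nonpos (by linarith : v - u ≤ 0), ← Real.norm_eq_abs]
    have := norm_setIntegral_le_of_norm_le_const_ae (μ := (volume : Measure ℝ))
      (s := Set.Ioc v u) measure_Ioc_lt_top (ae_restrict_of_ae hbd)
    rw [measureReal_def, Real.volume_Ioc, ENNReal.toReal_ofReal (by linarith)] at this
    linarith

lemma avg_diff_bound {g : ℝ → ℝ} {M : ℝ} (hmeas : AEStronglyMeasurable g volume)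
    (hbd : ∀ᵐ y : ℝ, ‖g y‖ ≤ M) (k : ℤ) (a x c : ℝ) :
    |avgJ g k a x - avgJ g k a c| ≤ (2:ℝ) ^ (-k) * (2 * M * |x - c|) := by
  have hint : ∀ p q : ℝ, IntervalIntegrable g volume p q := fun p q =>
    intervalIntegrable_iff.mpr
      (Measure.integrableOn_of_bounded measure_Ioc_lt_top.ne hmeas (ae_restrict_of_ae hbd))
  have hIco : ∀ p q : ℝ, p ≤ q → (∫ y in Set.Ico p q, g y) = ∫ y in p..q, g y := by
    intro p q hpq
    rw [intervalIntegral.integral_of_le hpq, integral_Ico_eq_integral_Ioo,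
      integral_Ioc_eq_integral_Ioo]
  set h : ℝ := (2:ℝ) ^ k with hh
  have hhpos : 0 < h := zpow_pos two_pos k
  set u : ℝ := x + a
  set v : ℝ := c + a
  have hA : (∫ y in u..v, g y) + (∫ y in v..(u + h), g y) = ∫ y in u..(u + h), g y :=
    intervalIntegral.integral_add_adjacent_intervals (hint _ _) (hint _ _)
  have hB : (∫ y in v..(u + h), g y) + (∫ y in (u + h)..(v + h), g y) = ∫ y in v..(v + h), g y :=
    intervalIntegral.integral_add_adjacent_intervals (hint _ _) (hint _ _)
  have e1 : avgJ g k a x = (2:ℝ) ^ (-k) * ∫ y in u..(u + h), g y := by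
    rw [avgJ, hIco _ _ (by linarith)]
  have e2 : avgJ g k a c = (2:ℝ) ^ (-k) * ∫ y in v..(v + h), g y := by
    rw [avgJ, hIco _ _ (by linarith)]
  have hb1 := abs_intervalIntegral_le_aux hbd u v
  have hb2 := abs_intervalIntegral_le_aux hbd (u + h) (v + h)
  have hvu : v - u = c - x := by ring
  have hvu2 : v + h - (u + h) = c - x := by ring
  rw [hvu, abs_sub_comm c x] at hb1
  rw [hvu2, abs_sub_comm c x] at hb2
  have hdiff : avgJ g k a x - avgJ g k a c
      = (2:ℝ) ^ (-k) * ((∫ y in u..v, g y) - ∫ y in (u + h)..(v + h), g y) := by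
    rw [e1, e2, ← hA, ← hB]; ring
  rw [hdiff, abs_mul, abs_of_nonneg (le_of_lt (zpow_pos two_pos _) : (0:ℝ) ≤ (2:ℝ) ^ (-k))]
  have hmain : |(∫ y in u..v, g y) - ∫ y in (u + h)..(v + h), g y| ≤ 2 * M * |x - c| := by
    calc _ ≤ |∫ y in u..v, g y| + |∫ y in (u + h)..(v + h), g y| := abs_sub _ _
      _ ≤ 2 * M * |x - c| := by linarith
  exact mul_le_mul_of_nonneg_left hmain (le_of_lt (zpow_pos two_pos _))

lemma floor_dyadic {k₀ k j : ℤ} (hk : k₀ ≤ k) {t : ℝ}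
    (h1 : (j:ℝ) * 2 ^ k₀ ≤ t) (h2 : t < (j + 1 : ℝ) * 2 ^ k₀) :
    ⌊t / (2:ℝ) ^ k⌋ = ⌊(j:ℝ) / (2:ℝ) ^ (k - k₀).toNat⌋ := by
  set n : ℕ := (k - k₀).toNat with hn
  have hkk : (2:ℝ) ^ k = 2 ^ k₀ * 2 ^ n := by
    rw [← zpow_natCast (2:ℝ) n, ← zpow_add₀ (two_ne_zero) k₀ (n:ℤ)]
    congr 1
    omega
  have hpn : (0:ℝ) < 2 ^ n := by positivity
  have hp0 : (0:ℝ) < 2 ^ k₀ := zpow_pos two_pos _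
  have hpk : (0:ℝ) < 2 ^ k := zpow_pos two_pos _
  set q : ℤ := ⌊(j:ℝ) / (2:ℝ) ^ n⌋ with hq
  have hql : (q:ℝ) ≤ (j:ℝ) / 2 ^ n := Int.floor_le _
  have hqu : (j:ℝ) / 2 ^ n < q + 1 := Int.lt_floor_add_one _
  have hint : (j:ℝ) + 1 ≤ ((q:ℝ) + 1) * 2 ^ n := by
    have : (j:ℝ) < ((q:ℝ) + 1) * 2 ^ n := by
      rw [← div_lt_iff₀ hpn]; exact hqu
    have hz : (j:ℤ) < (q + 1) * 2 ^ n := by exact_mod_cast this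
    have hz1 : (j:ℤ) + 1 ≤ (q + 1) * 2 ^ n := hz
    exact_mod_cast hz1
  apply Int.floor_eq_iff.mpr
  constructor
  · calc (q:ℝ) ≤ (j:ℝ) / 2 ^ n := hql
      _ = (j:ℝ) * 2 ^ k₀ / 2 ^ k := by rw [hkk]; field_simp
      _ ≤ t / 2 ^ k := div_le_div_of_nonneg_right h1 hpk.le
  · calc t / 2 ^ k < (j + 1 : ℝ) * 2 ^ k₀ / 2 ^ k :=
          div_lt_div_of_pos_right h2 hpk
      _ ≤ (q:ℝ) + 1 := by
          rw [hkk]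
          rw [div_le_iff₀ (by positivity)]
          calc (j + 1 : ℝ) * 2 ^ k₀ ≤ ((q:ℝ) + 1) * 2 ^ n * 2 ^ k₀ := by
                nlinarith
            _ = ((q:ℝ) + 1) * (2 ^ k₀ * 2 ^ n) := by ring

/-- for `f ∈ L^∞`, `I` dyadic of length `L = 2^{k₀}` with center `c_I`,
`x ∈ I`, and `f₂ = f·χ_{ℝ∖I*}`, one has
`∑_{k : 2^k ≥ L} sup_{J ∈ 𝓘_k} |M_{J+x} f₂(x) − E_k f₂(x) − (M_{J+c_I} f₂(c_I) − E_k f₂(c_I))|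
  ≤ C‖f‖_∞` for an absolute constant `C > 0`. -/
theorem stmt16 :
    ∃ C : ℝ, 0 < C ∧
      ∀ (f : ℝ → ℝ), MemLp f ⊤ (volume : Measure ℝ) →
        ∀ (k₀ j : ℤ) (x : ℝ), x ∈ dyadicI k₀ j →
          (∑' k : ℤ,
              if (2:ℝ) ^ k₀ ≤ (2:ℝ) ^ k then
                ⨆ a ∈ Set.Icc (-(2:ℝ) ^ k) 0,
                  ENNReal.ofReal
                    |avgJ ((dyadicStar k₀ j)ᶜ.indicator f) k a x -
                        dyadicE ((dyadicStar k₀ j)ᶜ.indicator f) k x -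
                        (avgJ ((dyadicStar k₀ j)ᶜ.indicator f) k a (dyadicC k₀ j) -
                          dyadicE ((dyadicStar k₀ j)ᶜ.indicator f) k (dyadicC k₀ j))|
              else 0) ≤
            ENNReal.ofReal (C * (eLpNorm f ⊤ (volume : Measure ℝ)).toReal) := by
  refine ⟨2, two_pos, ?_⟩
  intro f hf k₀ j x hx
  set g : ℝ → ℝ := (dyadicStar k₀ j)ᶜ.indicator f with hgdef
  set M : ℝ := (eLpNorm f ⊤ (volume : Measure ℝ)).toReal with hMdef
  have hM0 : 0 ≤ M := ENNReal.toReal_nonneg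
  have hmeas : AEStronglyMeasurable g volume :=
    hf.aestronglyMeasurable.indicator (measurableSet_Icc.compl)
  have hbd : ∀ᵐ y : ℝ, ‖g y‖ ≤ M := by
    have h1 : ∀ᵐ y : ℝ, (‖f y‖₊ : ℝ≥0∞) ≤ eLpNormEssSup f volume := ae_le_eLpNormEssSup
    have hne : eLpNormEssSup f volume ≠ ⊤ := by
      have h2 := hf.2
      rw [eLpNorm_exponent_top] at h2
      exact h2.ne
    filter_upwards [h1] with y hy
    have h3 : ‖f y‖ ≤ M := by
      have h4 := ENNReal.toReal_mono hne hy
      rw [ENNReal.coe_toReal, coe_nnnorm] at h4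
      rw [hMdef, eLpNorm_exponent_top]
      exact h4
    exact (norm_indicator_le_norm_self f y).trans h3
  have hp0 : (0:ℝ) < 2 ^ k₀ := zpow_pos two_pos _
  set c : ℝ := dyadicC k₀ j with hcdef
  have hexp : ((j:ℝ) + 1) * 2 ^ k₀ = (j:ℝ) * 2 ^ k₀ + 2 ^ k₀ := by ring
  have hx1 : (j:ℝ) * 2 ^ k₀ ≤ x := hx.1
  have hx2 : x < ((j:ℝ) + 1) * 2 ^ k₀ := hx.2
  have hc1 : (j:ℝ) * 2 ^ k₀ ≤ c := by rw [hcdef, dyadicC]; linarith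
  have hc2 : c < ((j:ℝ) + 1) * 2 ^ k₀ := by rw [hcdef, dyadicC]; linarith
  have hxc : |x - c| ≤ 2 ^ k₀ / 2 := by
    rw [abs_le, hcdef, dyadicC]
    constructor <;> [linarith; linarith]
  -- key real bound
  have key : ∀ k : ℤ, k₀ ≤ k → ∀ a : ℝ,
      |avgJ g k a x - dyadicE g k x - (avgJ g k a c - dyadicE g k c)|
        ≤ (2:ℝ) ^ (k₀ - k) * M := by
    intro k hk a
    have hfx := floor_dyadic hk hx1 hx2
    have hfc := floor_dyadic hk hc1 hc2
    have hE : dyadicE g k x = dyadicE g k c := by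
      rw [dyadicE, dyadicE, hfx, hfc]
    rw [hE, show avgJ g k a x - dyadicE g k c - (avgJ g k a c - dyadicE g k c)
        = avgJ g k a x - avgJ g k a c by ring]
    have h1 : 2 * M * |x - c| ≤ 2 ^ k₀ * M := by nlinarith [abs_nonneg (x - c)]
    have hzp : (2:ℝ) ^ (k₀ - k) = 2 ^ (-k) * 2 ^ k₀ := by
      rw [← zpow_add₀ (two_ne_zero : (2:ℝ) ≠ 0)]
      congr 1
      ring
    calc |avgJ g k a x - avgJ g k a c| ≤ (2:ℝ) ^ (-k) * (2 * M * |x - c|) :=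
          avg_diff_bound hmeas hbd k a x c
      _ ≤ (2:ℝ) ^ (-k) * (2 ^ k₀ * M) :=
          mul_le_mul_of_nonneg_left h1 (zpow_nonneg (by norm_num) _)
      _ = (2:ℝ) ^ (k₀ - k) * M := by rw [hzp]; ring
  have hcond : ∀ k : ℤ, ((2:ℝ) ^ k₀ ≤ (2:ℝ) ^ k) ↔ k₀ ≤ k := fun k =>
    zpow_le_zpow_iff_right₀ (one_lt_two)
  set F : ℤ → ℝ≥0∞ := fun k =>
    if (2:ℝ) ^ k₀ ≤ (2:ℝ) ^ k then ENNReal.ofReal ((2:ℝ) ^ (k₀ - k) * M) else 0 with hF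
  have hstep : ∀ k : ℤ,
      (if (2:ℝ) ^ k₀ ≤ (2:ℝ) ^ k then
          ⨆ a ∈ Set.Icc (-(2:ℝ) ^ k) 0,
            ENNReal.ofReal
              |avgJ g k a x - dyadicE g k x - (avgJ g k a c - dyadicE g k c)|
        else 0) ≤ F k := by
    intro k
    simp only [hF]
    split_ifs with h
    · exact iSup₂_le fun a _ =>
        ENNReal.ofReal_le_ofReal (key k ((hcond k).mp h) a)
    · exact le_rfl
  have hinj : Function.Injective (fun n : ℕ => k₀ + (n:ℤ)) := by
    intro a b hab
    simp only at hab
    omega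
  have hsupp : Function.support F ⊆ Set.range (fun n : ℕ => k₀ + (n:ℤ)) := by
    intro k hk
    have hkk : k₀ ≤ k := by
      by_contra hlt
      apply hk
      simp only [hF]
      rw [if_neg (fun hC => hlt ((hcond k).mp hC))]
    exact ⟨(k - k₀).toNat, by simp only; omega⟩
  calc (∑' k : ℤ,
        if (2:ℝ) ^ k₀ ≤ (2:ℝ) ^ k then
          ⨆ a ∈ Set.Icc (-(2:ℝ) ^ k) 0,
            ENNReal.ofReal
              |avgJ g k a x - dyadicE g k x - (avgJ g k a c - dyadicE g k c)|
        else 0)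
      ≤ ∑' k : ℤ, F k := ENNReal.tsum_le_tsum hstep
    _ = ∑' n : ℕ, F (k₀ + (n:ℤ)) := (hinj.tsum_eq hsupp).symm
    _ = ∑' n : ℕ, (2⁻¹ : ℝ≥0∞) ^ n * ENNReal.ofReal M := by
        refine tsum_congr fun n => ?_
        simp only [hF]
        rw [if_pos ((hcond _).mpr (by omega))]
        have hpw : (2:ℝ) ^ (k₀ - (k₀ + (n:ℤ))) = (2⁻¹ : ℝ) ^ n := by
          rw [show k₀ - (k₀ + (n:ℤ)) = -(n:ℤ) by ring, zpow_neg, zpow_natCast, inv_pow]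
        rw [hpw, ENNReal.ofReal_mul (by positivity)]
        congr 1
        rw [ENNReal.ofReal_pow (by norm_num), ENNReal.ofReal_inv_of_pos two_pos,
          ENNReal.ofReal_ofNat]
    _ = ENNReal.ofReal (2 * M) := by
        rw [ENNReal.tsum_mul_right, ENNReal.tsum_geometric, ENNReal.one_sub_inv_two, inv_inv,
          ENNReal.ofReal_mul (by norm_num), ENNReal.ofReal_ofNat]
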